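/- Let U_0, …, U_d be a decomposition of V and let A : V → V be a linear map such that (A − q^{2i−d}I)U_i ⊆ U_{i+1} for 0 ≤ i ≤ d (where U_{d+1} = 0). Then A is diagonalizable, its set of eigenvalues on V is {q^{2i−d} : 0 ≤ i ≤ d}, and for 0 ≤ i ≤ d the eigenspace of A for the eigenvalue q^{2i−d} has the same dimension as U_i. -/

import Mathlib

noncomputable section

/-- `U 0, …, U d` is a decomposition of `V` with diameter `d`: the `U i` with `i ≤ d` are nonzero,
`U i = 0` for `i > d`, and `V` is the (internal) direct sum of the `U i`. -/
def IsDecomposition {K V : Type*} [Field K] [AddCommGroup V] [Module K V]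
    (d : ℕ) (U : ℕ → Submodule K V) : Prop :=
  (∀ i, i ≤ d → U i ≠ ⊥) ∧ (∀ i, d < i → U i = ⊥) ∧
  (⨆ i, U i) = ⊤ ∧
  ∀ i, Disjoint (U i) (⨆ j, ⨆ _ : j ≠ i, U j)

open Module Submodule in
private lemma aux_finrank_biSup_le {K V : Type*} [Field K] [AddCommGroup V] [Module K V]
    [FiniteDimensional K V] (s : Finset ℕ) (p : ℕ → Submodule K V) :
    Module.finrank K ↥(⨆ i ∈ s, p i) ≤ ∑ i ∈ s, Module.finrank K ↥(p i) := by
  classical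
  induction s using Finset.induction with
  | empty => simp
  | @insert a s ha ih =>
    rw [Finset.iSup_insert, Finset.sum_insert ha]
    exact le_trans (Submodule.finrank_add_le_finrank_add_finrank _ _) (add_le_add le_rfl ih)


open Module Submodule Module.End

/-- Lemma 6.6: if `(A − q^{2i−d} I) U_i ⊆ U_{i+1}` for `0 ≤ i ≤ d`, then `A` is
diagonalizable with eigenvalue set `{q^{2i−d} : 0 ≤ i ≤ d}`, and the eigenspace for `q^{2i−d}` has
the same dimension as `U_i`. -/
theorem statement4 {K : Type*} [Field K] [IsAlgClosed K] [CharZero K]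
    (q : K) (hq : q ≠ 0) (hq1 : ∀ n : ℕ, 0 < n → q ^ n ≠ 1)
    {V : Type*} [AddCommGroup V] [Module K V] [FiniteDimensional K V]
    (d : ℕ) (U : ℕ → Submodule K V) (hU : IsDecomposition d U)
    (A : Module.End K V)
    (hA : ∀ i, i ≤ d → ∀ u ∈ U i, A u - q ^ (2 * (i : ℤ) - d) • u ∈ U (i + 1)) :
    (⨆ μ : K, Module.End.eigenspace A μ) = ⊤ ∧
    {μ : K | Module.End.HasEigenvalue A μ} =
      {μ : K | ∃ i, i ≤ d ∧ μ = q ^ (2 * (i : ℤ) - d)} ∧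
    ∀ i, i ≤ d →
      Module.finrank K (Module.End.eigenspace A (q ^ (2 * (i : ℤ) - d))) =
        Module.finrank K (U i) := by
  classical
  obtain ⟨hUne, hUbot, hUtop, hUind⟩ := hU
  set θ : ℕ → K := fun i => q ^ (2 * (i : ℤ) - d) with hθdef
  have θinj : ∀ i j, i ≤ d → j ≤ d → θ i = θ j → i = j := by
    intro i j hi hj h
    by_contra hne
    wlog hlt : i < j generalizing i j
    · exact this j i hj hi h.symm (Ne.symm hne) (by omega)
    have h1 : q ^ ((2 * (j : ℤ) - d) - (2 * (i : ℤ) - d)) = 1 := by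
      rw [zpow_sub₀ hq]
      show θ j / θ i = 1
      rw [h, div_self (zpow_ne_zero _ hq)]
    have h2 : ((2 * (j : ℤ) - d) - (2 * (i : ℤ) - d)) = ((2 * (j - i) : ℕ) : ℤ) := by
      push_cast [Nat.cast_sub hlt.le]; ring
    rw [h2, zpow_natCast] at h1
    exact hq1 _ (by omega) h1
  -- the "tail" spaces
  set W : ℕ → Submodule K V := fun k => ⨆ j, ⨆ _ : k ≤ j, U j with hWdef
  have hUleW : ∀ k j, k ≤ j → U j ≤ W k := fun k j h =>
    le_iSup₂ (f := fun j (_ : k ≤ j) => U j) j h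
  have hW0 : W 0 = ⊤ := by
    rw [← hUtop]
    exact le_antisymm (iSup₂_le fun j _ => le_iSup U j) (iSup_le fun j => hUleW 0 j (Nat.zero_le j))
  have hWbot : ∀ k, d < k → W k = ⊥ := by
    intro k hk
    refine le_bot_iff.mp (iSup₂_le fun j hj => ?_)
    rw [hUbot j (lt_of_lt_of_le hk hj)]
  have hWsucc : ∀ k, W k = U k ⊔ W (k + 1) := by
    intro k
    apply le_antisymm
    · refine iSup₂_le fun j hj => ?_
      rcases eq_or_lt_of_le hj with rfl | h
      · exact le_sup_left
      · exact le_sup_of_le_right (hUleW (k + 1) j h)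
    · exact sup_le (hUleW k k le_rfl) (iSup₂_le fun j hj => hUleW k j (by omega))
  have hWmono : ∀ k, W (k + 1) ≤ W k := fun k => iSup₂_le fun j hj => hUleW k j (by omega)
  have hWdisj : ∀ k, Disjoint (U k) (W (k + 1)) := fun k =>
    (hUind k).mono_right (iSup₂_le fun j hj =>
      le_iSup₂ (f := fun j (_ : j ≠ k) => U j) j (by omega))
  -- A preserves each W k
  have hAW : ∀ k, ∀ v ∈ W k, A v ∈ W k := by
    intro k
    suffices h : W k ≤ (W k).comap A from fun v hv => h hv
    refine iSup₂_le fun j hj u hu => ?_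
    rcases le_or_gt j d with hjd | hjd
    · have h1 := hA j hjd u hu
      have h2 : A u = (A u - θ j • u) + θ j • u := by abel
      rw [Submodule.mem_comap, h2]
      exact add_mem (hUleW k (j + 1) (by omega) h1) (smul_mem _ _ (hUleW k j hj hu))
    · rw [hUbot j hjd] at hu
      rw [Submodule.mem_bot] at hu
      simp [Submodule.mem_comap, hu]
  -- key component computation
  have comp : ∀ k, k ≤ d → ∀ (μ : K), ∀ u ∈ U k, ∀ w ∈ W (k + 1),
      A (u + w) = μ • (u + w) → (θ k - μ) • u ∈ W (k + 1) := by
    intro k hkd μ u hu w hw hAv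
    have hsum : A u + A w = μ • u + μ • w := by rw [← map_add, hAv, smul_add]
    have hu' : μ • u = A u + A w - μ • w := eq_sub_of_add_eq hsum.symm
    have key : (θ k - μ) • u = (μ • w - A w) - (A u - θ k • u) := by
      rw [sub_smul, hu']; abel
    rw [key]
    exact sub_mem (sub_mem (smul_mem _ _ hw) (hAW _ w hw))
      (hUleW (k + 1) (k + 1) le_rfl (hA k hkd u hu))
  -- descent: if no eigenvalue from index k on matches, eigenvector in W k is zero
  have descent : ∀ n k, d + 1 - k ≤ n → ∀ μ : K, (∀ j, k ≤ j → j ≤ d → μ ≠ θ j) →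
      ∀ v ∈ W k, A v = μ • v → v = 0 := by
    intro n
    induction n with
    | zero =>
      intro k hk μ _ v hv _
      rw [hWbot k (by omega)] at hv
      simpa using hv
    | succ n ih =>
      intro k hk μ hμ v hv hAv
      rcases le_or_gt k d with hkd | hkd
      · rw [hWsucc k] at hv
        obtain ⟨u, hu, w, hw, rfl⟩ := Submodule.mem_sup.mp hv
        have hcomp := comp k hkd μ u hu w hw hAv
        have h0 : (θ k - μ) • u = 0 :=
          Submodule.disjoint_def.mp (hWdisj k) _ (smul_mem _ _ hu) hcomp
        have hune : θ k - μ ≠ 0 := sub_ne_zero.mpr (Ne.symm (hμ k le_rfl hkd))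
        have hu0 : u = 0 := (smul_eq_zero.mp h0).resolve_left hune
        subst hu0
        rw [zero_add] at hAv ⊢
        exact ih (k + 1) (by omega) μ (fun j hj hjd => hμ j (by omega) hjd) w hw hAv
      · rw [hWbot k hkd] at hv
        simpa using hv
  -- an eigenvector for θ i lying in W k (k ≤ i) lies in W i
  have toWi : ∀ i, i ≤ d → ∀ n k, i - k ≤ n → k ≤ i → ∀ v ∈ W k, A v = θ i • v → v ∈ W i := by
    intro i hid n
    induction n with
    | zero =>
      intro k hk hki v hv _
      have : k = i := by omega
      subst this; exact hv
    | succ n ih =>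
      intro k hk hki v hv hAv
      rcases eq_or_lt_of_le hki with rfl | hki'
      · exact hv
      · rw [hWsucc k] at hv
        obtain ⟨u, hu, w, hw, rfl⟩ := Submodule.mem_sup.mp hv
        have hcomp := comp k (by omega) (θ i) u hu w hw hAv
        have h0 : (θ k - θ i) • u = 0 :=
          Submodule.disjoint_def.mp (hWdisj k) _ (smul_mem _ _ hu) hcomp
        have hune : θ k - θ i ≠ 0 := sub_ne_zero.mpr fun h => by
          have := θinj k i (by omega) hid h; omega
        have hu0 : u = 0 := (smul_eq_zero.mp h0).resolve_left hune
        subst hu0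
        rw [zero_add] at hAv ⊢
        exact ih (k + 1) (by omega) (by omega) w hw hAv
  set E : ℕ → Submodule K V := fun i => Module.End.eigenspace A (θ i) with hEdef
  -- each W k is contained in the span of the eigenspaces E j, k ≤ j ≤ d
  have upward : ∀ n k, d + 1 - k ≤ n → W k ≤ ⨆ j ∈ Finset.Icc k d, E j := by
    intro n
    induction n with
    | zero =>
      intro k hk
      rw [hWbot k (by omega)]; exact bot_le
    | succ n ih =>
      intro k hk
      rcases le_or_gt k d with hkd | hkd
      · have hsub : (⨆ j ∈ Finset.Icc (k + 1) d, E j) ≤ ⨆ j ∈ Finset.Icc k d, E j := by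
          refine iSup₂_le fun j hj => le_iSup₂ (f := fun j (_ : j ∈ Finset.Icc k d) => E j) j ?_
          simp only [Finset.mem_Icc] at hj ⊢; omega
        rw [hWsucc k]
        refine sup_le ?_ ((ih (k + 1) (by omega)).trans hsub)
        intro u hu
        have h1 : A u - θ k • u ∈ ⨆ j ∈ Finset.Icc (k + 1) d, E j :=
          ih (k + 1) (by omega) (hUleW (k + 1) (k + 1) le_rfl (hA k hkd u hu))
        rw [Submodule.mem_iSup_finset_iff_exists_sum] at h1
        obtain ⟨μf, hμf⟩ := h1
        set c : ℕ → V := fun j => (θ j - θ k)⁻¹ • (μf j : V) with hcdef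
        have hcE : ∀ j, c j ∈ E j := fun j => smul_mem _ _ (μf j).2
        have hAc : ∀ j, A (c j) = θ j • c j := fun j => Module.End.mem_eigenspace_iff.mp (hcE j)
        have hscal : ∀ j ∈ Finset.Icc (k + 1) d, (θ j - θ k) • c j = (μf j : V) := by
          intro j hj
          simp only [Finset.mem_Icc] at hj
          have hne : θ j - θ k ≠ 0 := sub_ne_zero.mpr fun h => by
            have := θinj j k hj.2 hkd h; omega
          rw [hcdef]; exact smul_inv_smul₀ hne _
        have hmemEk : u - ∑ j ∈ Finset.Icc (k + 1) d, c j ∈ E k := by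
          rw [hEdef]
          rw [Module.End.mem_eigenspace_iff, map_sub, map_sum, smul_sub, Finset.smul_sum]
          rw [Finset.sum_congr rfl fun j _ => hAc j]
          rw [sub_eq_sub_iff_sub_eq_sub]
          calc A u - θ k • u = ∑ j ∈ Finset.Icc (k + 1) d, (μf j : V) := hμf.symm
            _ = ∑ j ∈ Finset.Icc (k + 1) d, (θ j - θ k) • c j :=
                (Finset.sum_congr rfl hscal).symm
            _ = ∑ j ∈ Finset.Icc (k + 1) d, (θ j • c j - θ k • c j) :=
                Finset.sum_congr rfl fun j _ => sub_smul _ _ _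
            _ = _ := Finset.sum_sub_distrib _ _
        have hrw : u = (u - ∑ j ∈ Finset.Icc (k + 1) d, c j)
            + ∑ j ∈ Finset.Icc (k + 1) d, c j := by abel
        rw [hrw]
        refine add_mem ((le_iSup₂ (f := fun j (_ : j ∈ Finset.Icc k d) => E j) k
          (Finset.mem_Icc.mpr ⟨le_rfl, hkd⟩)) hmemEk) ?_
        exact hsub (Submodule.sum_mem _ fun j hj =>
          (le_iSup₂ (f := fun j (_ : j ∈ Finset.Icc (k + 1) d) => E j) j hj) (hcE j))
      · rw [hWbot k hkd]; exact bot_le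
  -- rank of W k
  have hWrank : ∀ n k, d + 1 - k ≤ n →
      finrank K (W k) = ∑ j ∈ Finset.Icc k d, finrank K (U j) := by
    intro n
    induction n with
    | zero =>
      intro k hk
      rw [hWbot k (by omega), Finset.Icc_eq_empty (by omega)]; simp
    | succ n ih =>
      intro k hk
      rcases le_or_gt k d with hkd | hkd
      · have hIcc : Finset.Icc k d = insert k (Finset.Icc (k + 1) d) := by
          ext x; simp only [Finset.mem_Icc, Finset.mem_insert]; omega
        rw [hIcc, Finset.sum_insert (by simp [Finset.mem_Icc])]
        have h2 := Submodule.finrank_sup_add_finrank_inf_eq (U k) (W (k + 1))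
        rw [(hWdisj k).eq_bot, finrank_bot, add_zero] at h2
        rw [hWsucc k, h2, ih (k + 1) (by omega)]
      · rw [hWbot k (by omega), Finset.Icc_eq_empty (by omega)]; simp
  have hEW : ∀ i, i ≤ d → E i ≤ W i := by
    intro i hid v hv
    have hv0 : v ∈ W 0 := hW0 ▸ Submodule.mem_top
    exact toWi i hid i 0 (by omega) (by omega) v hv0 (Module.End.mem_eigenspace_iff.mp hv)
  have hab : ∀ i, i ≤ d → finrank K (E i) ≤ finrank K (U i) := by
    intro i hid
    have hd : Disjoint (E i) (W (i + 1)) := by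
      rw [Submodule.disjoint_def]
      intro v h1 h2
      exact descent (d + 1) (i + 1) (by omega) (θ i)
        (fun j hj hjd h => by have := θinj i j hid hjd h; omega) v h2
        (Module.End.mem_eigenspace_iff.mp h1)
    have h2 := Submodule.finrank_sup_add_finrank_inf_eq (E i) (W (i + 1))
    rw [hd.eq_bot, finrank_bot, add_zero] at h2
    have h4 : finrank K ↥(E i ⊔ W (i + 1)) ≤ finrank K (W i) :=
      Submodule.finrank_mono (sup_le (hEW i hid) (hWmono i))
    have h7 : finrank K (W i) = finrank K (U i) + finrank K (W (i + 1)) := by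
      have h8 := Submodule.finrank_sup_add_finrank_inf_eq (U i) (W (i + 1))
      rw [(hWdisj i).eq_bot, finrank_bot, add_zero] at h8
      rw [hWsucc i, h8]
    omega
  have hEtop : (⨆ j ∈ Finset.Icc 0 d, E j) = ⊤ :=
    le_antisymm le_top (hW0 ▸ upward (d + 1) 0 (by omega))
  have hsumU : ∑ j ∈ Finset.Icc 0 d, finrank K (U j) = finrank K V := by
    have h := hWrank (d + 1) 0 (by omega)
    rw [hW0, finrank_top] at h
    exact h.symm
  have hsumE : finrank K V ≤ ∑ j ∈ Finset.Icc 0 d, finrank K (E j) := by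
    calc finrank K V = finrank K ↥(⨆ j ∈ Finset.Icc 0 d, E j) := by rw [hEtop, finrank_top]
      _ ≤ _ := aux_finrank_biSup_le _ _
  have hEq : ∀ i, i ≤ d → finrank K (E i) = finrank K (U i) := by
    intro i hid
    by_contra hne
    have hi : finrank K (E i) < finrank K (U i) := lt_of_le_of_ne (hab i hid) hne
    have hlt : ∑ j ∈ Finset.Icc 0 d, finrank K (E j) < ∑ j ∈ Finset.Icc 0 d, finrank K (U j) :=
      Finset.sum_lt_sum (fun j hj => hab j (Finset.mem_Icc.mp hj).2)
        ⟨i, Finset.mem_Icc.mpr ⟨by omega, hid⟩, hi⟩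
    omega
  refine ⟨?_, ?_, fun i hid => hEq i hid⟩
  · refine le_antisymm le_top ?_
    calc (⊤ : Submodule K V) = W 0 := hW0.symm
      _ ≤ ⨆ j ∈ Finset.Icc 0 d, E j := upward (d + 1) 0 (by omega)
      _ ≤ ⨆ μ : K, Module.End.eigenspace A μ :=
          iSup₂_le fun j _ => le_iSup (fun μ => Module.End.eigenspace A μ) (θ j)
  · ext μ
    simp only [Set.mem_setOf_eq]
    constructor
    · intro hE
      by_contra hc
      push_neg at hc
      obtain ⟨v, hv, hv0⟩ := (Submodule.ne_bot_iff _).mp (Module.End.hasEigenvalue_iff.mp hE)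
      refine hv0 (descent (d + 1) 0 (by omega) μ (fun j _ hjd => hc j hjd) v
        (hW0 ▸ Submodule.mem_top) (Module.End.mem_eigenspace_iff.mp hv))
    · rintro ⟨i, hid, rfl⟩
      rw [Module.End.hasEigenvalue_iff]
      intro h
      have h1 := hEq i hid
      rw [show Module.End.eigenspace A (θ i) = E i from rfl] at h
      rw [h, finrank_bot] at h1
      exact hUne i hid (Submodule.finrank_eq_zero.mp h1.symm)
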